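/- arXiv:2404.16021 — 4 statements merged into one kernel-verified Lean document; each statement's English description precedes it below -/
import Mathlib

section
/- Let (μ_n)_{n≥1} be a sequence of real numbers such that μ_n = A·(log n)² + B·log n + O(1) for some constants A, B ∈ ℝ. Then, as n → ∞, (1/θ(n−1)) · Σ_{i=1}^{n−1} |1 − μ_n + μ_i|³/(n−i) = O((log n)²); equivalently, the L³-norm ( (1/θ(n−1)) · Σ_{i=1}^{n−1} |1 − μ_n + μ_i|³/(n−i) )^{1/3} is O((log n)^{2/3}). -/
open MeasureTheory Filter Real Asymptotics

noncomputable section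

/-- The harmonic sum `θ(n) = ∑_{i=1}^n 1/i`. -/
def harmSum (n : ℕ) : ℝ := ∑ i ∈ Finset.Icc 1 n, (1 : ℝ) / i


lemma sum_inv_sqrt (m : ℕ) : ∑ i ∈ Finset.Icc 1 m, 1 / Real.sqrt i ≤ 2 * Real.sqrt m := by
  induction m with
  | zero => simp
  | succ m ih =>
    rw [Finset.sum_Icc_succ_top (by omega)]
    have h1 : Real.sqrt m * Real.sqrt (m+1) ≤ m + (1:ℝ)/2 := by
      have := Real.sqrt_mul_self (by positivity : (0:ℝ) ≤ m + 1/2)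
      nlinarith [Real.sqrt_nonneg (m:ℝ), Real.sqrt_nonneg ((m:ℝ)+1),
        Real.sq_sqrt (by positivity : (0:ℝ) ≤ (m:ℝ)), Real.sq_sqrt (by positivity : (0:ℝ) ≤ (m:ℝ)+1),
        Real.sqrt_le_sqrt (by nlinarith : (m:ℝ)*(m+1) ≤ (m+1/2)^2)]
    have h2 : (0:ℝ) < Real.sqrt (m+1) := Real.sqrt_pos.2 (by positivity)
    have key : 1 / Real.sqrt ((m:ℕ)+1 : ℕ) ≤ 2 * Real.sqrt (m+1) - 2 * Real.sqrt m := by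
      push_cast
      rw [div_le_iff₀ h2]
      nlinarith [Real.sq_sqrt (by positivity : (0:ℝ) ≤ (m:ℝ)+1)]
    push_cast at *
    linarith

lemma log_cube_le (x : ℝ) (hx : 1 ≤ x) : (Real.log x) ^ 3 ≤ 216 * Real.sqrt x := by
  have hx0 : (0:ℝ) < x := by linarith
  set y := x ^ ((1:ℝ)/6) with hy
  have hy1 : 1 ≤ y := Real.one_le_rpow hx (by norm_num)
  have hylog : Real.log x = 6 * Real.log y := by
    rw [hy, Real.log_rpow hx0]; ring
  have hlogy : Real.log y ≤ y := (Real.log_le_sub_one_of_pos (by linarith)).trans (by linarith)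
  have hlogy0 : 0 ≤ Real.log y := Real.log_nonneg hy1
  have hy3 : y ^ 3 = Real.sqrt x := by
    rw [hy, ← Real.rpow_natCast (x ^ ((1:ℝ)/6)) 3, ← Real.rpow_mul (le_of_lt hx0),
      Real.sqrt_eq_rpow]
    norm_num
  calc (Real.log x) ^ 3 = 216 * (Real.log y) ^ 3 := by rw [hylog]; ring
    _ ≤ 216 * y ^ 3 := by nlinarith [pow_le_pow_left₀ hlogy0 hlogy 3]
    _ = 216 * Real.sqrt x := by rw [hy3]

lemma term_bound (n i : ℕ) (hi : 1 ≤ i) (hin : i ≤ n - 1) (hn : 2 ≤ n) :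
    (Real.log n - Real.log i) ^ 3 / ((n:ℝ) - i) ≤
      432 / (Real.sqrt n * Real.sqrt i) + 8 * ((n:ℝ) - i) ^ 2 / (n:ℝ) ^ 3 := by
  have hI1 : (1:ℝ) ≤ i := by exact_mod_cast hi
  have hIn : (i:ℝ) ≤ (n:ℝ) - 1 := by
    have : (i:ℝ) ≤ ((n-1 : ℕ):ℝ) := by exact_mod_cast hin
    have hc : ((n-1 : ℕ):ℝ) = (n:ℝ) - 1 := by
      have : (1:ℕ) ≤ n := by omega
      push_cast [Nat.cast_sub this]; ring
    linarith [hc ▸ this]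
  have hN : (2:ℝ) ≤ n := by exact_mod_cast hn
  have hI0 : (0:ℝ) < i := by linarith
  have hN0 : (0:ℝ) < n := by linarith
  have hd : (0:ℝ) < (n:ℝ) - i := by linarith
  have hfrac : (1:ℝ) ≤ (n:ℝ)/i := (one_le_div hI0).2 (by linarith)
  have hlogdiff : Real.log n - Real.log i = Real.log ((n:ℝ)/i) := (Real.log_div (by positivity) (by positivity)).symm
  have hL0 : 0 ≤ Real.log ((n:ℝ)/i) := Real.log_nonneg hfrac
  rw [hlogdiff]
  set L := Real.log ((n:ℝ)/i) with hLdef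
  rcases le_or_gt (2*(i:ℝ)) (n:ℝ) with hcase | hcase
  · -- i small: use log cube bound
    have hcube : L ^ 3 ≤ 216 * Real.sqrt ((n:ℝ)/i) := log_cube_le _ hfrac
    have hsq : Real.sqrt ((n:ℝ)/i) = Real.sqrt n / Real.sqrt i := Real.sqrt_div hN0.le _
    have hsi : (0:ℝ) < Real.sqrt i := Real.sqrt_pos.2 hI0
    have hsn : (0:ℝ) < Real.sqrt n := Real.sqrt_pos.2 hN0
    have hsn2 : Real.sqrt n * Real.sqrt n = n := Real.mul_self_sqrt hN0.le
    have hcube' : L ^ 3 ≤ 216 * Real.sqrt n / Real.sqrt i := by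
      rw [hsq] at hcube
      rw [← mul_div_assoc] at hcube
      exact hcube
    have hmain : L ^ 3 / ((n:ℝ) - i) ≤ 432 / (Real.sqrt n * Real.sqrt i) := by
      rw [div_le_div_iff₀ hd (by positivity)]
      have h1 : L ^ 3 * Real.sqrt i ≤ 216 * Real.sqrt n := by
        rw [le_div_iff₀ hsi] at hcube'
        exact hcube'
      have h2 : (n:ℝ)/2 ≤ (n:ℝ) - i := by linarith
      calc L ^ 3 * (Real.sqrt n * Real.sqrt i) = (L ^ 3 * Real.sqrt i) * Real.sqrt n := by ring
        _ ≤ (216 * Real.sqrt n) * Real.sqrt n := by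
            apply mul_le_mul_of_nonneg_right h1 hsn.le
        _ = 216 * (n:ℝ) := by rw [mul_assoc, hsn2]
        _ ≤ 432 * ((n:ℝ) - i) := by linarith
    have hpos : (0:ℝ) ≤ 8 * ((n:ℝ) - i) ^ 2 / (n:ℝ) ^ 3 := by positivity
    linarith
  · -- i large: log(n/i) ≤ (n-i)/i ≤ 2(n-i)/n
    have hlog : L ≤ ((n:ℝ) - i)/i := by
      have := Real.log_le_sub_one_of_pos (show (0:ℝ) < (n:ℝ)/i by positivity)
      rw [hLdef]
      calc Real.log ((n:ℝ)/i) ≤ (n:ℝ)/i - 1 := this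
        _ = ((n:ℝ) - i)/i := by field_simp
    have h2 : ((n:ℝ) - i)/i ≤ 2*((n:ℝ) - i)/n := by
      rw [div_le_div_iff₀ hI0 hN0]; nlinarith
    have hLb : L ≤ 2*((n:ℝ) - i)/n := hlog.trans h2
    have hcube : L ^ 3 ≤ 8*((n:ℝ)-i)^3/(n:ℝ)^3 := by
      calc L ^ 3 ≤ (2*((n:ℝ) - i)/n)^3 := pow_le_pow_left₀ hL0 hLb 3
        _ = 8*((n:ℝ)-i)^3/(n:ℝ)^3 := by field_simp; ring
    have : L ^ 3 / ((n:ℝ) - i) ≤ 8 * ((n:ℝ) - i) ^ 2 / (n:ℝ) ^ 3 := by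
      rw [div_le_div_iff₀ hd (by positivity)]
      calc L^3 * (n:ℝ)^3 ≤ 8*((n:ℝ)-i)^3/(n:ℝ)^3 * (n:ℝ)^3 := by
            exact mul_le_mul_of_nonneg_right hcube (by positivity)
        _ = 8*((n:ℝ)-i)^2 * ((n:ℝ)-i) := by field_simp
    have hpos : (0:ℝ) ≤ 432 / (Real.sqrt n * Real.sqrt i) := by positivity
    linarith


lemma key_sum (n : ℕ) (hn : 2 ≤ n) :
    ∑ i ∈ Finset.Icc 1 (n-1), (Real.log n - Real.log i) ^ 3 / ((n:ℝ) - i) ≤ 872 := by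
  have hN0 : (0:ℝ) < n := by
    have : (2:ℝ) ≤ n := by exact_mod_cast hn
    linarith
  have hsn : (0:ℝ) < Real.sqrt n := Real.sqrt_pos.2 hN0
  have step1 : ∑ i ∈ Finset.Icc 1 (n-1), (Real.log n - Real.log i) ^ 3 / ((n:ℝ) - i) ≤
      ∑ i ∈ Finset.Icc 1 (n-1),
        (432 / (Real.sqrt n * Real.sqrt i) + 8 * ((n:ℝ) - i) ^ 2 / (n:ℝ) ^ 3) := by
    apply Finset.sum_le_sum
    intro i hi
    rw [Finset.mem_Icc] at hi
    exact term_bound n i hi.1 hi.2 hn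
  rw [Finset.sum_add_distrib] at step1
  have s1 : ∑ i ∈ Finset.Icc 1 (n-1), 432 / (Real.sqrt n * Real.sqrt i) ≤ 864 := by
    have : ∀ i ∈ Finset.Icc 1 (n-1), 432 / (Real.sqrt n * Real.sqrt i)
        = (432 / Real.sqrt n) * (1 / Real.sqrt i) := by
      intro i _; field_simp
    rw [Finset.sum_congr rfl this, ← Finset.mul_sum]
    have h1 : ∑ i ∈ Finset.Icc 1 (n-1), 1 / Real.sqrt i ≤ 2 * Real.sqrt n := by
      refine (sum_inv_sqrt (n-1)).trans ?_
      have : Real.sqrt ((n:ℕ)-1 : ℕ) ≤ Real.sqrt n := by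
        apply Real.sqrt_le_sqrt; exact_mod_cast Nat.sub_le n 1
      linarith
    calc 432 / Real.sqrt n * ∑ i ∈ Finset.Icc 1 (n-1), 1 / Real.sqrt i
        ≤ 432 / Real.sqrt n * (2 * Real.sqrt n) := by
          apply mul_le_mul_of_nonneg_left h1 (by positivity)
      _ = 864 := by field_simp; ring
  have s2 : ∑ i ∈ Finset.Icc 1 (n-1), 8 * ((n:ℝ) - i) ^ 2 / (n:ℝ) ^ 3 ≤ 8 := by
    have hterm : ∀ i ∈ Finset.Icc 1 (n-1), 8 * ((n:ℝ) - i) ^ 2 / (n:ℝ) ^ 3 ≤ 8 / n := by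
      intro i hi
      rw [Finset.mem_Icc] at hi
      have hI1 : (1:ℝ) ≤ i := by exact_mod_cast hi.1
      have hIn : (i:ℝ) ≤ (n:ℝ) := by
        exact_mod_cast (hi.2.trans (Nat.sub_le n 1))
      rw [div_le_div_iff₀ (by positivity) hN0]
      nlinarith [mul_nonneg (by linarith : (0:ℝ) ≤ (i:ℝ)) (by linarith : (0:ℝ) ≤ 2*(n:ℝ) - i), hN0.le]
    calc ∑ i ∈ Finset.Icc 1 (n-1), 8 * ((n:ℝ) - i) ^ 2 / (n:ℝ) ^ 3
        ≤ ∑ _i ∈ Finset.Icc 1 (n-1), 8 / (n:ℝ) := Finset.sum_le_sum hterm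
      _ = (n-1 : ℕ) * (8 / n) := by rw [Finset.sum_const, Nat.card_Icc]; simp
      _ ≤ (n:ℝ) * (8 / n) := by
          apply mul_le_mul_of_nonneg_right _ (by positivity)
          exact_mod_cast Nat.sub_le n 1
      _ = 8 := by field_simp
  linarith


lemma log_le_harmSum (m : ℕ) : Real.log (m+1) ≤ harmSum m := by
  have tel : ∑ j ∈ Finset.range m, (Real.log ((j:ℝ)+1+1) - Real.log ((j:ℝ)+1))
      = Real.log ((m:ℝ)+1) := by
    have h := Finset.sum_range_sub (fun j : ℕ => Real.log ((j:ℝ)+1)) m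
    push_cast at h
    simpa using h
  rw [harmSum, ← Finset.Ico_add_one_right_eq_Icc, Finset.sum_Ico_eq_sum_range,
    show m + 1 - 1 = m from rfl]
  rw [← tel]
  apply Finset.sum_le_sum
  intro j _
  have h1 : (0:ℝ) < (j:ℝ) + 1 := by positivity
  have h2 : Real.log ((j:ℝ)+1+1) - Real.log ((j:ℝ)+1) = Real.log (((j:ℝ)+1+1)/((j:ℝ)+1)) := by
    rw [Real.log_div (by positivity) (by positivity)]
  rw [h2]
  calc Real.log (((j:ℝ)+1+1)/((j:ℝ)+1)) ≤ ((j:ℝ)+1+1)/((j:ℝ)+1) - 1 :=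
        Real.log_le_sub_one_of_pos (by positivity)
    _ = 1/((j:ℝ)+1) := by field_simp; ring
    _ = 1/((1+j : ℕ):ℝ) := by push_cast; ring

lemma harm_reflect (m : ℕ) : ∑ i ∈ Finset.Icc 1 m, 1/(((m:ℝ)+1) - i) = harmSum m := by
  rw [harmSum, ← Finset.Ico_add_one_right_eq_Icc, Finset.sum_Ico_eq_sum_range,
    Finset.sum_Ico_eq_sum_range, show m + 1 - 1 = m from rfl]
  rw [← Finset.sum_range_reflect]
  apply Finset.sum_congr rfl
  intro j hj
  rw [Finset.mem_range] at hj
  have h1 : (1 + (m - 1 - j) : ℕ) = m - j := by omega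
  rw [h1, Nat.cast_sub (by omega : j ≤ m)]
  have h2 : ((m:ℝ)+1) - ((m:ℝ) - j) = ((1+j : ℕ):ℝ) := by push_cast; ring
  rw [h2]


set_option maxHeartbeats 1000000 in
lemma pointwise_bound (μ : ℕ → ℝ) (A B K : ℝ)
    (hK : ∀ n, |μ n - (A * Real.log n ^ 2 + B * Real.log n)| ≤ K)
    (n i : ℕ) (hn : 3 ≤ n) (hi : 1 ≤ i) (hin : i ≤ n - 1) :
    |1 - μ n + μ i| ^ 3 / ((n:ℝ) - i) ≤
      4 * (1 + 2*K + 2*|A| + |B|)^3 * (1 / ((n:ℝ) - i))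
      + 4 * (1 + 2*K + 2*|A| + |B|)^3 * Real.log n ^ 3 *
        ((Real.log n - Real.log i)^3 / ((n:ℝ) - i)) := by
  set C := 1 + 2*K + 2*|A| + |B| with hC
  have hK0 : 0 ≤ K := le_trans (abs_nonneg _) (hK 0)
  have hC1 : 1 ≤ C := by
    have := abs_nonneg A; have := abs_nonneg B; simp [hC]; linarith
  have hI1 : (1:ℝ) ≤ i := by exact_mod_cast hi
  have hIn : (i:ℝ) ≤ (n:ℝ) - 1 := by
    have h := hin
    have : (i:ℝ) ≤ ((n-1 : ℕ):ℝ) := by exact_mod_cast h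
    rwa [Nat.cast_sub (by omega), Nat.cast_one] at this
  have hN3 : (3:ℝ) ≤ n := by exact_mod_cast hn
  have hd : (0:ℝ) < (n:ℝ) - i := by linarith
  have hlogn1 : 1 ≤ Real.log n := by
    have : Real.exp 1 ≤ 3 := by
      have := Real.exp_one_lt_d9; linarith
    calc (1:ℝ) = Real.log (Real.exp 1) := (Real.log_exp 1).symm
      _ ≤ Real.log n := Real.log_le_log (Real.exp_pos 1) (by linarith)
  have hlogi0 : 0 ≤ Real.log i := Real.log_nonneg hI1
  have hlogmono : Real.log i ≤ Real.log n := Real.log_le_log (by linarith) (by linarith)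
  set L := Real.log n - Real.log i with hL
  have hL0 : 0 ≤ L := by simp [hL]; linarith
  -- step 1: |1 - μ n + μ i| ≤ C * (1 + log n * L)
  have habs : |1 - μ n + μ i| ≤ C * (1 + Real.log n * L) := by
    set an := μ n - (A * Real.log n ^ 2 + B * Real.log n) with han
    set ai := μ i - (A * Real.log i ^ 2 + B * Real.log i) with hai
    have ha := abs_le.1 (hK n)
    have hb := abs_le.1 (hK i)
    set D := Real.log n ^ 2 - Real.log i ^ 2 with hDdef
    have hD : D ≤ 2 * Real.log n * L := by
      have : D = (Real.log n + Real.log i) * L := by simp [hDdef, hL]; ring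
      rw [this]; nlinarith
    have hD0 : 0 ≤ D := by simp [hDdef]; nlinarith
    have h5 : A * D ≤ |A| * (2 * Real.log n * L) :=
      (mul_le_mul_of_nonneg_right (le_abs_self A) hD0).trans
        (mul_le_mul_of_nonneg_left hD (abs_nonneg A))
    have h6 : -(|A| * (2 * Real.log n * L)) ≤ A * D := by
      have e1 : (-|A|) * D ≤ A * D := mul_le_mul_of_nonneg_right (neg_abs_le A) hD0
      have e2 : (-|A|) * (2 * Real.log n * L) ≤ (-|A|) * D := by
        apply mul_le_mul_of_nonpos_left hD (by simp [abs_nonneg])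
      calc -(|A| * (2 * Real.log n * L)) = -|A| * (2 * Real.log n * L) := (neg_mul _ _).symm
        _ ≤ A * D := e2.trans e1
    have h7 : B * L ≤ |B| * L := mul_le_mul_of_nonneg_right (le_abs_self B) hL0
    have h8 : -(|B| * L) ≤ B * L := by
      have h := mul_le_mul_of_nonneg_right (neg_abs_le B) hL0
      rwa [neg_mul] at h
    have hexpr : 1 - μ n + μ i = 1 - an + ai - (A * D + B * L) := by
      simp [han, hai, hDdef, hL]; ring
    have habs1 : |1 - μ n + μ i| ≤ 1 + 2*K + |A| * (2 * Real.log n * L) + |B| * L := by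
      rw [hexpr, abs_le]
      constructor <;> [nlinarith [ha.1, ha.2, hb.1, hb.2]; nlinarith [ha.1, ha.2, hb.1, hb.2]]
    have m1 : L ≤ Real.log n * L := le_mul_of_one_le_left hL0 hlogn1
    have m2 : |B| * L ≤ |B| * (Real.log n * L) := mul_le_mul_of_nonneg_left m1 (abs_nonneg B)
    have m3 : 0 ≤ (1 + 2*K) * (Real.log n * L) := by positivity
    have hCexp : C * (1 + Real.log n * L)
        = C + (1+2*K) * (Real.log n * L) + 2*|A| * (Real.log n * L) + |B| * (Real.log n * L) := by
      simp [hC]; ring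
    rw [hCexp]
    have : |A| * (2 * Real.log n * L) = 2*|A| * (Real.log n * L) := by ring
    rw [this] at habs1
    simp only [hC]
    linarith [abs_nonneg A, abs_nonneg B]
  -- step 2: cube
  have hcube : |1 - μ n + μ i| ^ 3 ≤ 4 * C^3 * (1 + (Real.log n * L)^3) := by
    have h1 : |1 - μ n + μ i| ^ 3 ≤ (C * (1 + Real.log n * L))^3 :=
      pow_le_pow_left₀ (abs_nonneg _) habs 3
    have hx : 0 ≤ Real.log n * L := by positivity
    have h2 : (1 + Real.log n * L)^3 ≤ 4 * (1 + (Real.log n * L)^3) := by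
      nlinarith [sq_nonneg (Real.log n * L - 1), hx]
    calc |1 - μ n + μ i| ^ 3 ≤ (C * (1 + Real.log n * L))^3 := h1
      _ = C^3 * (1 + Real.log n * L)^3 := by ring
      _ ≤ C^3 * (4 * (1 + (Real.log n * L)^3)) := by
          apply mul_le_mul_of_nonneg_left h2 (by positivity)
      _ = 4 * C^3 * (1 + (Real.log n * L)^3) := by ring
  -- step 3: divide
  rw [div_le_iff₀ hd]
  have expand : (4 * C^3 * (1 / ((n:ℝ) - i))
      + 4 * C^3 * Real.log n ^ 3 * (L^3 / ((n:ℝ) - i))) * ((n:ℝ) - i)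
      = 4 * C^3 + 4 * C^3 * Real.log n ^ 3 * L^3 := by
    field_simp
  rw [expand]
  calc |1 - μ n + μ i| ^ 3 ≤ 4 * C^3 * (1 + (Real.log n * L)^3) := hcube
    _ = 4 * C^3 + 4 * C^3 * Real.log n ^ 3 * L^3 := by ring


lemma T_nonneg (μ : ℕ → ℝ) (n : ℕ) (hn : 3 ≤ n) :
    0 ≤ (1 / harmSum (n - 1)) *
        ∑ i ∈ Finset.Icc 1 (n - 1), |1 - μ n + μ i| ^ 3 / ((n : ℝ) - (i : ℝ)) := by
  have hθ : 0 < harmSum (n-1) := by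
    have h := log_le_harmSum (n-1)
    have hc : ((n-1:ℕ):ℝ) + 1 = (n:ℝ) := by
      rw [Nat.cast_sub (by omega)]; push_cast; ring
    rw [hc] at h
    have : (0:ℝ) < Real.log n :=
      Real.log_pos (by exact_mod_cast (by omega : 1 < n))
    linarith
  apply mul_nonneg (by positivity)
  apply Finset.sum_nonneg
  intro i hi
  rw [Finset.mem_Icc] at hi
  have hIn : (i:ℝ) ≤ (n:ℝ) - 1 := by
    have : (i:ℝ) ≤ ((n-1:ℕ):ℝ) := by exact_mod_cast hi.2
    rwa [Nat.cast_sub (by omega), Nat.cast_one] at this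
  have : (0:ℝ) < (n:ℝ) - i := by linarith
  positivity

lemma sum_bound (μ : ℕ → ℝ) (A B K : ℝ)
    (hK : ∀ n, |μ n - (A * Real.log n ^ 2 + B * Real.log n)| ≤ K)
    (n : ℕ) (hn : 3 ≤ n) :
    (1 / harmSum (n - 1)) *
        ∑ i ∈ Finset.Icc 1 (n - 1), |1 - μ n + μ i| ^ 3 / ((n : ℝ) - (i : ℝ))
      ≤ 3492 * (1 + 2*K + 2*|A| + |B|)^3 * Real.log n ^ 2 := by
  set C := 1 + 2*K + 2*|A| + |B| with hC
  have hK0 : 0 ≤ K := le_trans (abs_nonneg _) (hK 0)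
  have hC1 : 1 ≤ C := by
    have := abs_nonneg A; have := abs_nonneg B; simp [hC]; linarith
  have hC0 : 0 ≤ C := by linarith
  have hlogn1 : 1 ≤ Real.log n := by
    have he : Real.exp 1 ≤ 3 := by have := Real.exp_one_lt_d9; linarith
    have hN3 : (3:ℝ) ≤ n := by exact_mod_cast hn
    calc (1:ℝ) = Real.log (Real.exp 1) := (Real.log_exp 1).symm
      _ ≤ Real.log n := Real.log_le_log (Real.exp_pos 1) (by linarith)
  have hcast : ((n-1:ℕ):ℝ) + 1 = (n:ℝ) := by
    rw [Nat.cast_sub (by omega)]; push_cast; ring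
  have hθlog : Real.log n ≤ harmSum (n-1) := by
    have h := log_le_harmSum (n-1); rwa [hcast] at h
  have hθpos : 0 < harmSum (n-1) := by linarith
  -- bound the sum
  have hsum1 : ∑ i ∈ Finset.Icc 1 (n-1), (1:ℝ)/((n:ℝ) - i) = harmSum (n-1) := by
    have h := harm_reflect (n-1)
    rw [hcast] at h
    exact h
  have hsum2 := key_sum n (by omega)
  have step : ∑ i ∈ Finset.Icc 1 (n - 1), |1 - μ n + μ i| ^ 3 / ((n : ℝ) - (i : ℝ))
      ≤ 4 * C^3 * harmSum (n-1) + 4 * C^3 * Real.log n ^ 3 * 872 := by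
    calc ∑ i ∈ Finset.Icc 1 (n - 1), |1 - μ n + μ i| ^ 3 / ((n : ℝ) - (i : ℝ))
        ≤ ∑ i ∈ Finset.Icc 1 (n - 1), (4 * C^3 * (1 / ((n:ℝ) - i))
          + 4 * C^3 * Real.log n ^ 3 * ((Real.log n - Real.log i)^3 / ((n:ℝ) - i))) := by
          apply Finset.sum_le_sum
          intro i hi
          rw [Finset.mem_Icc] at hi
          exact pointwise_bound μ A B K hK n i hn hi.1 hi.2
      _ = 4 * C^3 * (∑ i ∈ Finset.Icc 1 (n-1), (1:ℝ)/((n:ℝ) - i))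
          + 4 * C^3 * Real.log n ^ 3 *
            (∑ i ∈ Finset.Icc 1 (n-1), (Real.log n - Real.log i)^3 / ((n:ℝ) - i)) := by
          rw [Finset.sum_add_distrib, Finset.mul_sum, Finset.mul_sum]
      _ ≤ 4 * C^3 * harmSum (n-1) + 4 * C^3 * Real.log n ^ 3 * 872 := by
          rw [hsum1]
          have := mul_le_mul_of_nonneg_left hsum2 (by positivity : (0:ℝ) ≤ 4 * C^3 * Real.log n ^ 3)
          linarith
  have hlog3 : Real.log n ^ 3 ≤ harmSum (n-1) * Real.log n ^ 2 := by
    have := mul_le_mul_of_nonneg_right hθlog (sq_nonneg (Real.log n))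
    calc Real.log n ^ 3 = Real.log n * Real.log n ^ 2 := by ring
      _ ≤ harmSum (n-1) * Real.log n ^ 2 := by nlinarith [sq_nonneg (Real.log n)]
  calc (1 / harmSum (n - 1)) *
        ∑ i ∈ Finset.Icc 1 (n - 1), |1 - μ n + μ i| ^ 3 / ((n : ℝ) - (i : ℝ))
      ≤ (1 / harmSum (n - 1)) * (4 * C^3 * harmSum (n-1) + 4 * C^3 * Real.log n ^ 3 * 872) := by
        apply mul_le_mul_of_nonneg_left step (by positivity)
    _ ≤ (1 / harmSum (n - 1)) *
        (4 * C^3 * harmSum (n-1) + 3488 * C^3 * (harmSum (n-1) * Real.log n ^ 2)) := by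
        apply mul_le_mul_of_nonneg_left _ (by positivity)
        nlinarith [pow_pos (lt_of_lt_of_le one_pos hC1) 3]
    _ = 4 * C^3 + 3488 * C^3 * Real.log n ^ 2 := by
        field_simp
    _ ≤ 3492 * C^3 * Real.log n ^ 2 := by
        have h1 : 1 ≤ Real.log n ^ 2 := by nlinarith
        nlinarith [pow_pos (lt_of_lt_of_le one_pos hC1) 3]

/-- if `μ_n = A (log n)² + B log n + O(1)` then
`(1/θ(n−1)) ∑_{i=1}^{n−1} |1 − μ_n + μ_i|³/(n−i) = O((log n)²)`; equivalently its cube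
root is `O((log n)^{2/3})`. -/
theorem third_moment_toll_bound
    (μ : ℕ → ℝ) (A B : ℝ)
    (hμ : (fun n : ℕ => μ n - (A * Real.log n ^ 2 + B * Real.log n)) =O[atTop]
      (fun _ : ℕ => (1 : ℝ))) :
    (fun n : ℕ => (1 / harmSum (n - 1)) *
        ∑ i ∈ Finset.Icc 1 (n - 1), |1 - μ n + μ i| ^ 3 / ((n : ℝ) - (i : ℝ)))
      =O[atTop] (fun n : ℕ => Real.log n ^ 2) ∧
    (fun n : ℕ => ((1 / harmSum (n - 1)) *
        ∑ i ∈ Finset.Icc 1 (n - 1), |1 - μ n + μ i| ^ 3 / ((n : ℝ) - (i : ℝ))) ^ ((1 : ℝ) / 3))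
      =O[atTop] (fun n : ℕ => Real.log n ^ ((2 : ℝ) / 3)) := by
  obtain ⟨K, hK⟩ := Asymptotics.isBigO_one_nat_atTop_iff.1 hμ
  simp only [Real.norm_eq_abs] at hK
  set C₂ : ℝ := 3492 * (1 + 2*K + 2*|A| + |B|)^3 with hC₂
  have hK0 : 0 ≤ K := le_trans (abs_nonneg _) (hK 0)
  have hC₂0 : 0 < C₂ := by
    have := abs_nonneg A; have := abs_nonneg B
    have h1 : (1:ℝ) ≤ 1 + 2*K + 2*|A| + |B| := by linarith
    have := pow_pos (lt_of_lt_of_le one_pos h1) 3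
    rw [hC₂]; positivity
  constructor
  · rw [Asymptotics.isBigO_iff]
    refine ⟨C₂, Filter.eventually_atTop.2 ⟨3, fun n hn => ?_⟩⟩
    have h1 := sum_bound μ A B K hK n hn
    have h0 := T_nonneg μ n hn
    rw [Real.norm_eq_abs, Real.norm_eq_abs, abs_of_nonneg h0, abs_of_nonneg (sq_nonneg _)]
    calc _ ≤ C₂ * Real.log n ^ 2 := by rw [hC₂]; linarith
      _ = C₂ * Real.log n ^ 2 := rfl
  · rw [Asymptotics.isBigO_iff]
    refine ⟨C₂ ^ ((1:ℝ)/3), Filter.eventually_atTop.2 ⟨3, fun n hn => ?_⟩⟩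
    have h1 := sum_bound μ A B K hK n hn
    have h0 := T_nonneg μ n hn
    have hlog0 : 0 ≤ Real.log n := Real.log_nonneg (by exact_mod_cast (by omega : 1 ≤ n))
    rw [Real.norm_eq_abs, Real.norm_eq_abs, abs_of_nonneg (Real.rpow_nonneg h0 _),
      abs_of_nonneg (Real.rpow_nonneg hlog0 _)]
    have step1 : ((1 / harmSum (n - 1)) *
        ∑ i ∈ Finset.Icc 1 (n - 1), |1 - μ n + μ i| ^ 3 / ((n : ℝ) - (i : ℝ))) ^ ((1:ℝ)/3)
        ≤ (C₂ * Real.log n ^ 2) ^ ((1:ℝ)/3) := by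
      apply Real.rpow_le_rpow h0 (by rw [hC₂] at *; linarith) (by norm_num)
    have step2 : (C₂ * Real.log n ^ 2) ^ ((1:ℝ)/3)
        = C₂ ^ ((1:ℝ)/3) * Real.log n ^ ((2:ℝ)/3) := by
      rw [Real.mul_rpow hC₂0.le (sq_nonneg _)]
      congr 1
      rw [← Real.rpow_natCast (Real.log n) 2, ← Real.rpow_mul hlog0]
      norm_num
    rw [step2] at step1
    exact step1
end
end

section
/- For n ≥ 2 let I_n be a random variable with P(I_n = i) = 1/((n−i)·θ(n−1)) for 1 ≤ i ≤ n−1, and set ℓ_n = log n for n ≥ 2 and ℓ_1 = 1. Suppose nonnegative real sequences (d_n) and (r_n) satisfy d_n ≤ E[(ℓ_{I_n}/ℓ_n)^{9/2} · d_{I_n}] + r_n for all n ≥ 2, and r_n = O((log n)^{−5/2}). Then for every sufficiently small ε > 0, d_n = O((log n)^{−1/2+ε}). -/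
open MeasureTheory Filter Real Asymptotics

noncomputable section

/-- `ℓ_n = log n` for `n ≥ 2` and `ℓ_1 = 1`. -/
def ellFun (n : ℕ) : ℝ := if n = 1 then 1 else Real.log n


lemma harmSum_eq (n : ℕ) : harmSum n = (harmonic n : ℝ) := by
  rw [harmSum, harmonic_eq_sum_Icc]
  push_cast
  simp [one_div]

lemma one_le_harmSum {m : ℕ} (hm : 1 ≤ m) : 1 ≤ harmSum m := by
  rw [harmSum]
  have := Finset.single_le_sum (f := fun i : ℕ => (1:ℝ)/i)
    (fun i _ => by positivity) (Finset.mem_Icc.mpr ⟨le_refl 1, hm⟩)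
  simpa using this

lemma harmSum_le (m : ℕ) : harmSum m ≤ 1 + Real.log m := by
  rw [harmSum_eq]
  exact_mod_cast harmonic_le_one_add_log m

lemma sum_inv_reindex (n : ℕ) (hn : 2 ≤ n) :
    ∑ i ∈ Finset.Icc 1 (n-1), (1:ℝ)/((n:ℝ)-(i:ℝ)) = harmSum (n-1) := by
  rw [harmSum]
  apply Finset.sum_nbij' (i := fun i => n - i) (j := fun j => n - j)
  · intro a ha; simp only [Finset.mem_Icc] at *; omega
  · intro a ha; simp only [Finset.mem_Icc] at *; omega
  · intro a ha; simp only [Finset.mem_Icc] at ha; omega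
  · intro a ha; simp only [Finset.mem_Icc] at ha; omega
  · intro a ha; simp only [Finset.mem_Icc] at ha
    congr 1
    have : ((n - a : ℕ) : ℝ) = (n:ℝ) - (a:ℝ) := by
      have : a ≤ n := by omega
      push_cast [this]; ring
    rw [this]

lemma deficit (n : ℕ) (hn : 16 ≤ n) (k : ℝ) (hk : 1 ≤ k) :
    ∑ i ∈ Finset.Icc 2 (n-1), Real.log i ^ k / ((n:ℝ) - (i:ℝ))
      ≤ harmSum (n-1) * Real.log n ^ k - Real.log 2 / 4 * Real.log n ^ (k-1) := by
  set L := Real.log n with hL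
  have hk0 : (0:ℝ) ≤ k := by linarith
  have hn1 : (1:ℝ) < (n:ℝ) := by exact_mod_cast (by omega : 1 < n)
  have h2n : (2:ℝ) < (n:ℝ) := by exact_mod_cast (by omega : 2 < n)
  have hLpos : 0 < L := Real.log_pos hn1
  have hlog2pos : (0:ℝ) < Real.log 2 := Real.log_pos (by norm_num)
  have hbpos : 0 < L - Real.log 2 := by
    have : Real.log 2 < L := Real.log_lt_log (by norm_num) h2n
    linarith
  -- per-term saving on Icc 2 (n/2)
  have hsave : ∀ i ∈ Finset.Icc 2 (n/2),
      Real.log 2 * L ^ (k-1) / (n:ℝ) ≤ (L ^ k - Real.log i ^ k) / ((n:ℝ) - (i:ℝ)) := by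
    intro i hi
    rw [Finset.mem_Icc] at hi
    obtain ⟨hi2, hin⟩ := hi
    have hilog : Real.log i ≤ L - Real.log 2 := by
      have h1 : (i:ℝ) ≤ (n:ℝ)/2 := by
        calc (i:ℝ) ≤ ((n/2 : ℕ) : ℝ) := by exact_mod_cast hin
          _ ≤ (n:ℝ)/2 := Nat.cast_div_le
      have h2 : Real.log i ≤ Real.log ((n:ℝ)/2) :=
        Real.log_le_log (by exact_mod_cast (by omega : 0 < i)) h1
      rwa [Real.log_div (by positivity) (by norm_num)] at h2
    have hnum : Real.log 2 * L ^ (k-1) ≤ L ^ k - Real.log i ^ k := by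
      have h3 : Real.log i ^ k ≤ (L - Real.log 2) ^ k :=
        Real.rpow_le_rpow (Real.log_nonneg (by exact_mod_cast (by omega : 1 ≤ i))) hilog hk0
      have h4 : (L - Real.log 2) ^ k ≤ L ^ k - Real.log 2 * L ^ (k-1) := by
        have e1 : L - Real.log 2 = L * ((L - Real.log 2)/L) := by field_simp
        have e2 : (L - Real.log 2) ^ k = L ^ k * ((L - Real.log 2)/L) ^ k := by
          conv_lhs => rw [e1]
          rw [Real.mul_rpow (le_of_lt hLpos) (by positivity)]
        have e3 : ((L - Real.log 2)/L) ^ k ≤ ((L - Real.log 2)/L) ^ (1:ℝ) :=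
          Real.rpow_le_rpow_of_exponent_ge (by positivity)
            (by rw [div_le_one hLpos]; linarith) hk
        have e4 : L ^ (k-1) * L = L ^ k := by
          rw [← Real.rpow_add_one (ne_of_gt hLpos) (k-1)]; ring_nf
        rw [e2]
        calc L ^ k * ((L - Real.log 2)/L) ^ k
            ≤ L ^ k * ((L - Real.log 2)/L) ^ (1:ℝ) := by
              apply mul_le_mul_of_nonneg_left e3 (by positivity)
          _ = L ^ (k-1) * (L - Real.log 2) := by
              rw [Real.rpow_one, ← e4]; field_simp
          _ = L ^ k - Real.log 2 * L ^ (k-1) := by rw [← e4]; ring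
      linarith
    apply div_le_div₀ (by nlinarith [Real.rpow_nonneg (le_of_lt hLpos) (k-1)]) hnum
    · have : (i:ℝ) < (n:ℝ) := by exact_mod_cast (by omega : i < n)
      linarith
    · have : (0:ℝ) ≤ (i:ℝ) := by positivity
      linarith
  -- total saving
  have hsub : Finset.Icc 2 (n/2) ⊆ Finset.Icc 2 (n-1) := by
    apply Finset.Icc_subset_Icc_right; omega
  have hsavepos : ∀ i ∈ Finset.Icc 2 (n-1),
      0 ≤ (L ^ k - Real.log i ^ k) / ((n:ℝ) - (i:ℝ)) := by
    intro i hi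
    rw [Finset.mem_Icc] at hi
    have h1 : Real.log i ^ k ≤ L ^ k :=
      Real.rpow_le_rpow (Real.log_nonneg (by exact_mod_cast (by omega : 1 ≤ i)))
        (Real.log_le_log (by exact_mod_cast (by omega : 0 < i)) (by exact_mod_cast (by omega : i ≤ n))) hk0
    have h2 : (i:ℝ) < (n:ℝ) := by exact_mod_cast (by omega : i < n)
    apply div_nonneg (by linarith) (by linarith)
  have htotal : Real.log 2 / 4 * L ^ (k-1)
      ≤ ∑ i ∈ Finset.Icc 2 (n-1), (L ^ k - Real.log i ^ k) / ((n:ℝ) - (i:ℝ)) := by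
    have hcard : (Finset.Icc 2 (n/2)).card = n/2 - 1 := by rw [Nat.card_Icc]; omega
    have h1 : (Finset.Icc 2 (n/2)).card • (Real.log 2 * L ^ (k-1) / (n:ℝ))
        ≤ ∑ i ∈ Finset.Icc 2 (n/2), (L ^ k - Real.log i ^ k) / ((n:ℝ) - (i:ℝ)) :=
      Finset.card_nsmul_le_sum _ _ _ hsave
    have h2 : ∑ i ∈ Finset.Icc 2 (n/2), (L ^ k - Real.log i ^ k) / ((n:ℝ) - (i:ℝ))
        ≤ ∑ i ∈ Finset.Icc 2 (n-1), (L ^ k - Real.log i ^ k) / ((n:ℝ) - (i:ℝ)) :=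
      Finset.sum_le_sum_of_subset_of_nonneg hsub (fun i hi _ => hsavepos i hi)
    have h3 : (n:ℝ)/4 ≤ ((n/2 - 1 : ℕ) : ℝ) := by
      have : n ≤ 4 * (n/2 - 1) := by omega
      have h4 : (n:ℝ) ≤ 4 * ((n/2 - 1 : ℕ):ℝ) := by exact_mod_cast this
      linarith
    have h5 : Real.log 2 / 4 * L ^ (k-1)
        ≤ ((n/2 - 1 : ℕ):ℝ) * (Real.log 2 * L ^ (k-1) / (n:ℝ)) := by
      have hn0 : (0:ℝ) < n := by positivity
      have hq : 0 ≤ Real.log 2 * L ^ (k-1) / (n:ℝ) := by positivity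
      calc Real.log 2 / 4 * L ^ (k-1) = (n:ℝ)/4 * (Real.log 2 * L ^ (k-1) / (n:ℝ)) := by
            field_simp
        _ ≤ ((n/2 - 1 : ℕ):ℝ) * (Real.log 2 * L ^ (k-1) / (n:ℝ)) :=
            mul_le_mul_of_nonneg_right h3 hq
    calc Real.log 2 / 4 * L ^ (k-1)
        ≤ ((n/2 - 1 : ℕ):ℝ) * (Real.log 2 * L ^ (k-1) / (n:ℝ)) := h5
      _ = (Finset.Icc 2 (n/2)).card • (Real.log 2 * L ^ (k-1) / (n:ℝ)) := by
          rw [hcard, nsmul_eq_mul]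
      _ ≤ _ := le_trans h1 h2
  -- main sum bound
  have hmain : ∑ i ∈ Finset.Icc 2 (n-1), L ^ k / ((n:ℝ) - (i:ℝ)) ≤ harmSum (n-1) * L ^ k := by
    have h1 : ∑ i ∈ Finset.Icc 2 (n-1), L ^ k / ((n:ℝ) - (i:ℝ))
        = L ^ k * ∑ i ∈ Finset.Icc 2 (n-1), (1:ℝ) / ((n:ℝ) - (i:ℝ)) := by
      rw [Finset.mul_sum]; apply Finset.sum_congr rfl; intro i hi; ring
    have h2 : ∑ i ∈ Finset.Icc 2 (n-1), (1:ℝ) / ((n:ℝ) - (i:ℝ))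
        ≤ ∑ i ∈ Finset.Icc 1 (n-1), (1:ℝ) / ((n:ℝ) - (i:ℝ)) := by
      apply Finset.sum_le_sum_of_subset_of_nonneg (Finset.Icc_subset_Icc_left (by omega))
      intro i hi _
      rw [Finset.mem_Icc] at hi
      have : (i:ℝ) < (n:ℝ) := by exact_mod_cast (by omega : i < n)
      exact le_of_lt (div_pos one_pos (by linarith))
    rw [h1]
    calc L ^ k * ∑ i ∈ Finset.Icc 2 (n-1), (1:ℝ) / ((n:ℝ) - (i:ℝ))
        ≤ L ^ k * ∑ i ∈ Finset.Icc 1 (n-1), (1:ℝ) / ((n:ℝ) - (i:ℝ)) :=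
          mul_le_mul_of_nonneg_left h2 (Real.rpow_nonneg hLpos.le k)
      _ = harmSum (n-1) * L ^ k := by rw [sum_inv_reindex n (by omega)]; ring
  calc ∑ i ∈ Finset.Icc 2 (n-1), Real.log i ^ k / ((n:ℝ) - (i:ℝ))
      = ∑ i ∈ Finset.Icc 2 (n-1), (L ^ k / ((n:ℝ) - (i:ℝ))
          - (L ^ k - Real.log i ^ k) / ((n:ℝ) - (i:ℝ))) := by
        apply Finset.sum_congr rfl; intro i hi; ring
    _ = ∑ i ∈ Finset.Icc 2 (n-1), L ^ k / ((n:ℝ) - (i:ℝ))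
          - ∑ i ∈ Finset.Icc 2 (n-1), (L ^ k - Real.log i ^ k) / ((n:ℝ) - (i:ℝ)) :=
        Finset.sum_sub_distrib _ _
    _ ≤ harmSum (n-1) * L ^ k - Real.log 2 / 4 * L ^ (k-1) := by
        apply sub_le_sub hmain htotal

set_option maxHeartbeats 2000000 in
/-- the contraction lemma. If nonnegative sequences `(d_n)`, `(r_n)` satisfy
`d_n ≤ E[(ℓ_{I_n}/ℓ_n)^{9/2} d_{I_n}] + r_n` for `n ≥ 2` (expectation over
`P(I_n = i) = 1/((n−i)θ(n−1))`, `1 ≤ i ≤ n−1`) and `r_n = O((log n)^{−5/2})`, then for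
every sufficiently small `ε > 0` one has `d_n = O((log n)^{−1/2+ε})`. -/
theorem contraction_lemma
    (d r : ℕ → ℝ) (hd : ∀ n, 0 ≤ d n) (hr : ∀ n, 0 ≤ r n)
    (hrec : ∀ n : ℕ, 2 ≤ n →
      d n ≤ (1 / harmSum (n - 1)) *
          (∑ i ∈ Finset.Icc 1 (n - 1),
            (ellFun i / ellFun n) ^ ((9 : ℝ) / 2) * d i / ((n : ℝ) - (i : ℝ)))
        + r n)
    (hrO : r =O[atTop] (fun n : ℕ => Real.log n ^ (-(5 : ℝ) / 2))) :
    ∃ ε₀ > (0 : ℝ), ∀ ε : ℝ, 0 < ε → ε ≤ ε₀ →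
      d =O[atTop] (fun n : ℕ => Real.log n ^ (-(1 : ℝ) / 2 + ε)) := by
  refine ⟨1, one_pos, fun ε hε hε1 => ?_⟩
  rw [isBigO_iff] at hrO
  obtain ⟨A, hA⟩ := hrO
  rw [eventually_atTop] at hA
  obtain ⟨N, hN⟩ := hA
  set n₀ := max N 16 with hn₀def
  obtain ⟨C, hCdef⟩ : ∃ c : ℝ, c = (∑ i ∈ Finset.Icc 2 n₀, d i * Real.log i ^ ((1:ℝ)/2 - ε))
      + 8*(d 1 + |A|)/Real.log 2 + 1 := ⟨_, rfl⟩
  have hlog2pos : (0:ℝ) < Real.log 2 := Real.log_pos (by norm_num)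
  have hsumnn : 0 ≤ ∑ i ∈ Finset.Icc 2 n₀, d i * Real.log i ^ ((1:ℝ)/2 - ε) := by
    apply Finset.sum_nonneg
    intro i hi
    rw [Finset.mem_Icc] at hi
    exact mul_nonneg (hd i)
      (Real.rpow_nonneg (Real.log_nonneg (by exact_mod_cast hi.1.trans' one_le_two)) _)
  have hd1A : 0 ≤ d 1 + |A| := add_nonneg (hd 1) (abs_nonneg A)
  have hdiv : 0 ≤ 8*(d 1 + |A|)/Real.log 2 := by positivity
  have hC1 : 1 ≤ C := by rw [hCdef]; linarith
  have hC0 : 0 ≤ C := by linarith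
  have hCA : d 1 + |A| ≤ C * (Real.log 2 / 8) := by
    have h1 : 8*(d 1 + |A|)/Real.log 2 ≤ C := by rw [hCdef]; linarith
    calc d 1 + |A| = (8*(d 1 + |A|)/Real.log 2) * (Real.log 2/8) := by
          field_simp
      _ ≤ C * (Real.log 2/8) := mul_le_mul_of_nonneg_right h1 (by positivity)
  have key : ∀ n : ℕ, 2 ≤ n → d n ≤ C * Real.log n ^ (-(1:ℝ)/2 + ε) := by
    intro n
    induction n using Nat.strong_induction_on with
    | _ n IH =>
    intro hn2
    have hn1R : (1:ℝ) < (n:ℝ) := by exact_mod_cast (by omega : 1 < n)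
    have hLpos : (0:ℝ) < Real.log n := Real.log_pos hn1R
    by_cases hcase : n ≤ n₀
    · -- base case: n ≤ n₀
      have hterm : d n * Real.log n ^ ((1:ℝ)/2 - ε) ≤ C := by
        have h1 : d n * Real.log n ^ ((1:ℝ)/2 - ε)
            ≤ ∑ i ∈ Finset.Icc 2 n₀, d i * Real.log i ^ ((1:ℝ)/2 - ε) :=
          Finset.single_le_sum (f := fun i : ℕ => d i * Real.log i ^ ((1:ℝ)/2-ε))
            (fun i hi => by
              rw [Finset.mem_Icc] at hi
              exact mul_nonneg (hd i)
                (Real.rpow_nonneg (Real.log_nonneg (by exact_mod_cast hi.1.trans' one_le_two)) _))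
            (Finset.mem_Icc.mpr ⟨hn2, hcase⟩)
        rw [hCdef]; linarith
      calc d n = d n * Real.log n ^ ((1:ℝ)/2 - ε) * Real.log n ^ (-(1:ℝ)/2 + ε) := by
            rw [mul_assoc, ← Real.rpow_add hLpos,
              show (1:ℝ)/2 - ε + (-(1:ℝ)/2 + ε) = 0 by ring, Real.rpow_zero, mul_one]
        _ ≤ C * Real.log n ^ (-(1:ℝ)/2 + ε) :=
            mul_le_mul_of_nonneg_right hterm (Real.rpow_nonneg hLpos.le _)
    · -- main case: n > n₀
      push_neg at hcase
      have h16 : 16 ≤ n₀ := le_max_right N 16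
      have hN0 : N ≤ n₀ := le_max_left N 16
      have hn16 : 16 ≤ n := by omega
      have hnN : N ≤ n := by omega
      set L := Real.log (n:ℝ) with hLdef
      have hL1 : (1:ℝ) ≤ L := by
        have h17 : Real.exp 1 ≤ (n:ℝ) := by
          have h9 := Real.exp_one_lt_d9
          have hn3 : (3:ℝ) ≤ (n:ℝ) := by exact_mod_cast (by omega : 3 ≤ n)
          linarith
        calc (1:ℝ) = Real.log (Real.exp 1) := (Real.log_exp 1).symm
          _ ≤ L := Real.log_le_log (Real.exp_pos 1) h17
      obtain ⟨θ, hθdef⟩ : ∃ t : ℝ, t = harmSum (n-1) := ⟨_, rfl⟩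
      have hθ1 : 1 ≤ θ := by rw [hθdef]; exact one_le_harmSum (by omega)
      have hθpos : 0 < θ := by linarith
      have hθ2L : θ ≤ 2 * L := by
        have h1 : θ ≤ 1 + Real.log ((n-1:ℕ):ℝ) := by rw [hθdef]; exact harmSum_le (n-1)
        have h2 : Real.log ((n-1:ℕ):ℝ) ≤ L := by
          apply Real.log_le_log (by exact_mod_cast (by omega : 0 < n - 1))
          exact_mod_cast (by omega : n - 1 ≤ n)
        linarith
      set k := 4 + ε with hkdef
      have hk1 : (1:ℝ) ≤ k := by rw [hkdef]; linarith
      set F : ℕ → ℝ :=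
        fun i => (ellFun i / ellFun n) ^ ((9:ℝ)/2) * d i / ((n:ℝ) - (i:ℝ)) with hFdef
      have hsplit : Finset.Icc 1 (n-1) = insert 1 (Finset.Icc 2 (n-1)) := by
        ext x; simp only [Finset.mem_Icc, Finset.mem_insert]; omega
      have hFsum : ∑ i ∈ Finset.Icc 1 (n-1), F i = F 1 + ∑ i ∈ Finset.Icc 2 (n-1), F i := by
        rw [hsplit, Finset.sum_insert (by simp)]
      have helln : ellFun n = L := by rw [ellFun, if_neg (by omega : ¬ n = 1)]
      -- bound on F 1
      have hF1nn : 0 ≤ F 1 := by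
        rw [hFdef]
        apply div_nonneg (mul_nonneg (Real.rpow_nonneg ?_ _) (hd 1)) ?_
        · rw [ellFun, if_pos rfl, helln]; positivity
        · have : (1:ℝ) ≤ (n:ℝ) := by exact_mod_cast (by omega : 1 ≤ n)
          push_cast; linarith
      have hF1 : F 1 ≤ d 1 * L ^ (-(9:ℝ)/2) := by
        have he : F 1 = (1 / L) ^ ((9:ℝ)/2) * d 1 / ((n:ℝ) - 1) := by
          rw [hFdef]; simp only
          rw [helln, ellFun, if_pos rfl]; push_cast; ring_nf
        have h1 : (1 / L) ^ ((9:ℝ)/2) = L ^ (-(9:ℝ)/2) := by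
          rw [one_div, Real.inv_rpow (by linarith : (0:ℝ) ≤ L),
            ← Real.rpow_neg (by linarith : (0:ℝ) ≤ L)]
          norm_num
        rw [he, h1]
        have h2 : (1:ℝ) ≤ (n:ℝ) - 1 := by
          have : (2:ℝ) ≤ (n:ℝ) := by exact_mod_cast hn2
          linarith
        calc L ^ (-(9:ℝ)/2) * d 1 / ((n:ℝ)-1) ≤ L ^ (-(9:ℝ)/2) * d 1 :=
              div_le_self (mul_nonneg (Real.rpow_nonneg (by linarith) _) (hd 1)) h2
          _ = d 1 * L ^ (-(9:ℝ)/2) := mul_comm _ _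
      -- bound on F i for i ≥ 2
      have hFi : ∀ i ∈ Finset.Icc 2 (n-1),
          F i ≤ C * L ^ (-(9:ℝ)/2) * (Real.log i ^ k / ((n:ℝ)-(i:ℝ))) := by
        intro i hi
        rw [Finset.mem_Icc] at hi
        obtain ⟨hi2, hin⟩ := hi
        have hip : (1:ℝ) < (i:ℝ) := by exact_mod_cast (by omega : 1 < i)
        have hlipos : (0:ℝ) < Real.log i := Real.log_pos hip
        have hiell : ellFun i = Real.log i := by rw [ellFun, if_neg (by omega : ¬ i = 1)]
        have hni : (i:ℝ) < (n:ℝ) := by exact_mod_cast (by omega : i < n)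
        have hnipos : (0:ℝ) < (n:ℝ) - (i:ℝ) := by linarith
        have hdi : d i ≤ C * Real.log i ^ (-(1:ℝ)/2 + ε) := IH i (by omega) hi2
        have e : Real.log i ^ ((9:ℝ)/2) * Real.log i ^ (-(1:ℝ)/2 + ε) = Real.log i ^ k := by
          rw [← Real.rpow_add hlipos]; congr 1; rw [hkdef]; ring
        calc F i = Real.log i ^ ((9:ℝ)/2) / L ^ ((9:ℝ)/2) * d i / ((n:ℝ)-(i:ℝ)) := by
              rw [hFdef]; simp only
              rw [hiell, helln, Real.div_rpow (Real.log_nonneg (by linarith)) (by linarith : (0:ℝ) ≤ L)]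
          _ ≤ Real.log i ^ ((9:ℝ)/2) / L ^ ((9:ℝ)/2) * (C * Real.log i ^ (-(1:ℝ)/2 + ε)) / ((n:ℝ)-(i:ℝ)) := by
              have hXnn2 : 0 ≤ Real.log i ^ ((9:ℝ)/2) / L ^ ((9:ℝ)/2) :=
                div_nonneg (Real.rpow_nonneg hlipos.le _)
                  (Real.rpow_nonneg (by linarith) _)
              apply div_le_div_of_nonneg_right (mul_le_mul_of_nonneg_left hdi hXnn2) hnipos.le
          _ = C * L ^ (-(9:ℝ)/2) * (Real.log i ^ k / ((n:ℝ)-(i:ℝ))) := by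
              have hinv : L ^ (-(9:ℝ)/2) = (L ^ ((9:ℝ)/2))⁻¹ := by
                rw [show (-(9:ℝ)/2) = -((9:ℝ)/2) by ring,
                  Real.rpow_neg (by linarith : (0:ℝ) ≤ L)]
              rw [hinv, ← e]; ring
      -- total sum bound
      have hCL : 0 ≤ C * L ^ (-(9:ℝ)/2) :=
        mul_nonneg hC0 (Real.rpow_nonneg (by linarith) _)
      have hT := deficit n hn16 k hk1
      rw [← hθdef] at hT
      have hS : ∑ i ∈ Finset.Icc 1 (n-1), F i
          ≤ F 1 + C * L ^ (-(9:ℝ)/2) * (θ * L ^ k - Real.log 2/4 * L ^ (k-1)) := by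
        rw [hFsum]
        have h1 : ∑ i ∈ Finset.Icc 2 (n-1), F i
            ≤ C * L ^ (-(9:ℝ)/2) * ∑ i ∈ Finset.Icc 2 (n-1), (Real.log i ^ k / ((n:ℝ)-(i:ℝ))) := by
          rw [Finset.mul_sum]
          exact Finset.sum_le_sum hFi
        have h2 : C * L ^ (-(9:ℝ)/2) * ∑ i ∈ Finset.Icc 2 (n-1), (Real.log i ^ k / ((n:ℝ)-(i:ℝ)))
            ≤ C * L ^ (-(9:ℝ)/2) * (θ * L ^ k - Real.log 2/4 * L ^ (k-1)) :=
          mul_le_mul_of_nonneg_left hT hCL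
        linarith
      -- bound on r n
      have hYnn : 0 ≤ L ^ (-(5:ℝ)/2 + ε) := Real.rpow_nonneg (by linarith) _
      have hXnn : 0 ≤ L ^ (-(1:ℝ)/2 + ε) := Real.rpow_nonneg (by linarith) _
      have hrn : r n ≤ |A| * L ^ (-(5:ℝ)/2 + ε) := by
        have h1 := hN n hnN
        rw [Real.norm_eq_abs, Real.norm_eq_abs, abs_of_nonneg (hr n),
          abs_of_nonneg (Real.rpow_nonneg (by linarith : (0:ℝ) ≤ Real.log (n:ℝ)) _)] at h1
        have h2 : L ^ (-(5:ℝ)/2) ≤ L ^ (-(5:ℝ)/2 + ε) :=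
          Real.rpow_le_rpow_of_exponent_le hL1 (by linarith)
        calc r n ≤ A * L ^ (-(5:ℝ)/2) := h1
          _ ≤ |A| * L ^ (-(5:ℝ)/2) :=
              mul_le_mul_of_nonneg_right (le_abs_self A) (Real.rpow_nonneg (by linarith) _)
          _ ≤ |A| * L ^ (-(5:ℝ)/2 + ε) := mul_le_mul_of_nonneg_left h2 (abs_nonneg A)
      -- rpow algebra
      have p1 : L ^ (-(9:ℝ)/2) * L ^ k = L ^ (-(1:ℝ)/2 + ε) := by
        rw [← Real.rpow_add hLpos]; congr 1; rw [hkdef]; ring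
      have p2 : L ^ (-(9:ℝ)/2) * L ^ (k-1) = L * L ^ (-(5:ℝ)/2 + ε) := by
        rw [← Real.rpow_add hLpos,
          show L * L ^ (-(5:ℝ)/2 + ε) = L ^ ((1:ℝ) + (-(5:ℝ)/2 + ε)) from by
            rw [Real.rpow_add hLpos 1 (-(5:ℝ)/2 + ε), Real.rpow_one]]
        congr 1; rw [hkdef]; ring
      have p3 : L ^ (-(9:ℝ)/2) ≤ L ^ (-(5:ℝ)/2 + ε) :=
        Real.rpow_le_rpow_of_exponent_le hL1 (by linarith)
      -- assemble
      have q1 : C * L ^ (-(9:ℝ)/2) * (θ * L ^ k) = θ * (C * L ^ (-(1:ℝ)/2 + ε)) := by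
        rw [← p1]; ring
      have q2 : C * L ^ (-(9:ℝ)/2) * (Real.log 2/4 * L ^ (k-1))
          = C * (Real.log 2/4) * (L * L ^ (-(5:ℝ)/2 + ε)) := by
        rw [← p2]; ring
      have hB' : F 1 + C * L ^ (-(9:ℝ)/2) * (θ * L ^ k - Real.log 2/4 * L ^ (k-1))
          ≤ θ * (F 1 + C * L ^ (-(1:ℝ)/2 + ε) - C * (Real.log 2/8) * L ^ (-(5:ℝ)/2 + ε)) := by
        have hq0 : 0 ≤ C * (Real.log 2/8) * L ^ (-(5:ℝ)/2 + ε) :=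
          mul_nonneg (mul_nonneg hC0 (by positivity)) hYnn
        have h3 : θ * (C * (Real.log 2/8) * L ^ (-(5:ℝ)/2 + ε))
            ≤ C * (Real.log 2/4) * (L * L ^ (-(5:ℝ)/2 + ε)) := by
          have := mul_le_mul_of_nonneg_right hθ2L hq0
          linarith [this]
        have h4 : F 1 ≤ θ * F 1 := le_mul_of_one_le_left hF1nn hθ1
        have h5 : C * L ^ (-(9:ℝ)/2) * (θ * L ^ k - Real.log 2/4 * L ^ (k-1))
            = θ * (C * L ^ (-(1:ℝ)/2 + ε)) - C * (Real.log 2/4) * (L * L ^ (-(5:ℝ)/2 + ε)) := by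
          rw [← q1, ← q2]; ring
        rw [h5]
        linarith [h3, h4]
      have hB : (1/θ) * (F 1 + C * L ^ (-(9:ℝ)/2) * (θ * L ^ k - Real.log 2/4 * L ^ (k-1)))
          ≤ F 1 + C * L ^ (-(1:ℝ)/2 + ε) - C * (Real.log 2/8) * L ^ (-(5:ℝ)/2 + ε) := by
        have h6 := mul_le_mul_of_nonneg_left hB' (le_of_lt (one_div_pos.mpr hθpos))
        have h7 : (1/θ) * (θ * (F 1 + C * L ^ (-(1:ℝ)/2 + ε)
            - C * (Real.log 2/8) * L ^ (-(5:ℝ)/2 + ε)))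
            = F 1 + C * L ^ (-(1:ℝ)/2 + ε) - C * (Real.log 2/8) * L ^ (-(5:ℝ)/2 + ε) := by
          rw [← mul_assoc, one_div, inv_mul_cancel₀ (ne_of_gt hθpos), one_mul]
        linarith
      have hrec' := hrec n hn2
      rw [← hθdef] at hrec'
      have hsum_eq : (∑ i ∈ Finset.Icc 1 (n - 1),
          (ellFun i / ellFun n) ^ ((9:ℝ)/2) * d i / ((n:ℝ) - (i:ℝ)))
          = ∑ i ∈ Finset.Icc 1 (n-1), F i := by rw [hFdef]
      rw [hsum_eq] at hrec' 
      have hmono : (1/θ) * (∑ i ∈ Finset.Icc 1 (n-1), F i)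
          ≤ (1/θ) * (F 1 + C * L ^ (-(9:ℝ)/2) * (θ * L ^ k - Real.log 2/4 * L ^ (k-1))) :=
        mul_le_mul_of_nonneg_left hS (le_of_lt (one_div_pos.mpr hθpos))
      have hF1' : F 1 ≤ d 1 * L ^ (-(5:ℝ)/2 + ε) :=
        le_trans hF1 (mul_le_mul_of_nonneg_left p3 (hd 1))
      have hfinal : d n ≤ C * L ^ (-(1:ℝ)/2 + ε)
          + ((d 1 + |A|) - C * (Real.log 2/8)) * L ^ (-(5:ℝ)/2 + ε) := by
        linarith [hrec', hmono, hB, hrn, hF1']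
      have hlast : ((d 1 + |A|) - C * (Real.log 2/8)) * L ^ (-(5:ℝ)/2 + ε) ≤ 0 := by
        apply mul_nonpos_of_nonpos_of_nonneg (by linarith) hYnn
      linarith
  -- conclude
  rw [isBigO_iff]
  refine ⟨C, ?_⟩
  filter_upwards [eventually_ge_atTop 2] with n hn
  have hLpos : (0:ℝ) < Real.log n :=
    Real.log_pos (by exact_mod_cast (by omega : 1 < n))
  rw [Real.norm_eq_abs, Real.norm_eq_abs, abs_of_nonneg (hd n),
    abs_of_nonneg (Real.rpow_nonneg hLpos.le _)]
  exact key n hn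
end
end

section
/- Let (ξ(k))_{k≥1} be a real sequence with ξ(k) = O(log k / k). Then, as n → ∞, Σ_{k=1}^{n−1} |ξ(k)·log(k/n)|/(n−k) = O((log n)³/n). (This uses the bound Σ_{k=1}^{n−1} log(n/k)/(k(n−k)) = O((log n)²/n).) -/
open MeasureTheory Filter Real Asymptotics

noncomputable section

lemma sum_inv_Icc_le (m : ℕ) :
    ∑ k ∈ Finset.Icc 1 m, ((k : ℝ))⁻¹ ≤ 1 + Real.log m := by
  have := harmonic_le_one_add_log m
  have h : ((harmonic m : ℚ) : ℝ) = ∑ k ∈ Finset.Icc 1 m, ((k : ℝ))⁻¹ := by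
    rw [harmonic_eq_sum_Icc]; push_cast; ring_nf
  linarith [h ▸ this]

lemma sum_inv_sub_eq (n : ℕ) (hn : 1 ≤ n) :
    ∑ k ∈ Finset.Icc 1 (n - 1), ((n : ℝ) - (k : ℝ))⁻¹
      = ∑ k ∈ Finset.Icc 1 (n - 1), ((k : ℝ))⁻¹ := by
  refine Finset.sum_nbij' (fun k => n - k) (fun k => n - k) ?_ ?_ ?_ ?_ ?_
  all_goals intro k hk
  · simp only [Finset.mem_Icc] at hk ⊢; omega
  · simp only [Finset.mem_Icc] at hk ⊢; omega
  · simp only [Finset.mem_Icc] at hk; omega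
  · simp only [Finset.mem_Icc] at hk; omega
  · simp only [Finset.mem_Icc] at hk
    rw [Nat.cast_sub (by omega)]

/-- if `ξ(k) = O(log k / k)` then
`∑_{k=1}^{n−1} |ξ(k) log(k/n)|/(n−k) = O((log n)³/n)`. -/
theorem xi_log_sum_bound
    (ξ : ℕ → ℝ)
    (hξ : ξ =O[atTop] (fun k : ℕ => Real.log k / k)) :
    (fun n : ℕ => ∑ k ∈ Finset.Icc 1 (n - 1),
        |ξ k * Real.log ((k : ℝ) / (n : ℝ))| / ((n : ℝ) - (k : ℝ)))
      =O[atTop] (fun n : ℕ => Real.log n ^ 3 / n) := by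
  rw [Asymptotics.isBigO_iff] at hξ ⊢
  obtain ⟨c, hc⟩ := hξ
  rw [Filter.eventually_atTop] at hc
  obtain ⟨N₀, hN₀⟩ := hc
  set N := max N₀ 3 with hNdef
  have hN3 : 3 ≤ N := le_max_right _ _
  set M := ∑ k ∈ Finset.Icc 1 N, |ξ k| with hMdef
  have hMnn : 0 ≤ M := Finset.sum_nonneg fun k _ => abs_nonneg _
  have hMk : ∀ k ∈ Finset.Icc 1 N, |ξ k| ≤ M := fun k hk =>
    Finset.single_le_sum (f := fun i => |ξ i|) (fun i _ => abs_nonneg _) hk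
  refine ⟨4 * |c| + 2 * N * M, ?_⟩
  rw [Filter.eventually_atTop]
  refine ⟨2 * N + 4, fun n hn => ?_⟩
  -- basic facts about n
  have hn10 : (10 : ℕ) ≤ n := by omega
  have hnR : (10 : ℝ) ≤ n := by exact_mod_cast hn10
  have hnpos : (0 : ℝ) < n := by linarith
  have hln1 : 1 ≤ Real.log n := by
    rw [Real.le_log_iff_exp_le hnpos]
    have := Real.exp_one_lt_d9
    linarith
  have hln3 : Real.log n ≤ Real.log n ^ 3 := le_self_pow₀ hln1 (by norm_num)
  have hX : (0 : ℝ) ≤ Real.log n ^ 3 / n := by positivity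
  have hnN : 2 * (N : ℝ) + 4 ≤ n := by exact_mod_cast hn
  -- per-k facts
  have hkfacts : ∀ k ∈ Finset.Icc 1 (n - 1),
      (0 : ℝ) < k ∧ (0 : ℝ) < (n : ℝ) - k ∧
      |Real.log ((k : ℝ) / n)| ≤ Real.log n := by
    intro k hk
    simp only [Finset.mem_Icc] at hk
    have hk1 : (1 : ℝ) ≤ k := by exact_mod_cast hk.1
    have hkn : (k : ℝ) < n := by
      have : k < n := by omega
      exact_mod_cast this
    refine ⟨by linarith, by linarith, ?_⟩
    rw [Real.log_div (by linarith) (by linarith)]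
    have hlk : 0 ≤ Real.log k := Real.log_nonneg hk1
    have hle : Real.log k ≤ Real.log n := Real.log_le_log (by linarith) hkn.le
    rw [abs_of_nonpos (by linarith)]
    linarith
  have hnonneg : ∀ k ∈ Finset.Icc 1 (n - 1),
      0 ≤ |ξ k * Real.log ((k : ℝ) / n)| / ((n : ℝ) - k) := by
    intro k hk
    obtain ⟨_, h2, _⟩ := hkfacts k hk
    positivity
  -- split the sum
  have hsub : N ≤ n - 1 := by omega
  have hsplit : Finset.Icc 1 (n - 1) = Finset.Icc 1 N ∪ Finset.Ioc N (n - 1) := by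
    ext a
    simp only [Finset.mem_Icc, Finset.mem_union, Finset.mem_Ioc]
    omega
  have hdisj : Disjoint (Finset.Icc 1 N) (Finset.Ioc N (n - 1)) := by
    rw [Finset.disjoint_left]
    intro a ha hb
    simp only [Finset.mem_Icc, Finset.mem_Ioc] at ha hb
    omega
  -- Part 1 bound
  have h1 : ∑ k ∈ Finset.Icc 1 N, |ξ k * Real.log ((k : ℝ) / n)| / ((n : ℝ) - k)
      ≤ 2 * N * M * (Real.log n ^ 3 / n) := by
    have hper : ∀ k ∈ Finset.Icc 1 N,
        |ξ k * Real.log ((k : ℝ) / n)| / ((n : ℝ) - k)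
          ≤ 2 * M * (Real.log n ^ 3 / n) := by
      intro k hk
      have hk' : k ∈ Finset.Icc 1 (n - 1) := by
        simp only [Finset.mem_Icc] at hk ⊢; omega
      obtain ⟨hkpos, hdk, hlog⟩ := hkfacts k hk'
      have hkN : (k : ℝ) ≤ N := by
        simp only [Finset.mem_Icc] at hk; exact_mod_cast hk.2
      have hden : (n : ℝ) / 2 ≤ (n : ℝ) - k := by linarith
      have hnum : |ξ k * Real.log ((k : ℝ) / n)| ≤ M * Real.log n := by
        rw [abs_mul]
        exact mul_le_mul (hMk k hk) hlog (abs_nonneg _) hMnn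
      calc |ξ k * Real.log ((k : ℝ) / n)| / ((n : ℝ) - k)
          ≤ (M * Real.log n) / ((n : ℝ) / 2) :=
            div_le_div₀ (by positivity) hnum (by linarith) hden
        _ = 2 * M * Real.log n / n := by
            rw [div_div_eq_mul_div]; ring
        _ ≤ 2 * M * (Real.log n ^ 3 / n) := by
            rw [mul_div_assoc]
            apply mul_le_mul_of_nonneg_left _ (by positivity)
            gcongr
    calc ∑ k ∈ Finset.Icc 1 N, |ξ k * Real.log ((k : ℝ) / n)| / ((n : ℝ) - k)
        ≤ ∑ _k ∈ Finset.Icc 1 N, 2 * M * (Real.log n ^ 3 / n) :=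
          Finset.sum_le_sum hper
      _ = N * (2 * M * (Real.log n ^ 3 / n)) := by
          rw [Finset.sum_const, Nat.card_Icc, nsmul_eq_mul]
          norm_num
      _ = 2 * N * M * (Real.log n ^ 3 / n) := by ring
  -- Part 2 bound
  have h2 : ∑ k ∈ Finset.Ioc N (n - 1), |ξ k * Real.log ((k : ℝ) / n)| / ((n : ℝ) - k)
      ≤ 4 * |c| * (Real.log n ^ 3 / n) := by
    have hper : ∀ k ∈ Finset.Ioc N (n - 1),
        |ξ k * Real.log ((k : ℝ) / n)| / ((n : ℝ) - k)
          ≤ (|c| * Real.log n ^ 2 / n) * (((k : ℝ))⁻¹ + ((n : ℝ) - k)⁻¹) := by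
      intro k hk
      have hk' : k ∈ Finset.Icc 1 (n - 1) := by
        simp only [Finset.mem_Icc, Finset.mem_Ioc] at hk ⊢; omega
      obtain ⟨hkpos, hdk, hlog⟩ := hkfacts k hk'
      simp only [Finset.mem_Ioc] at hk
      have hk1R : (1 : ℝ) ≤ k := by
        have : 1 ≤ k := by omega
        exact_mod_cast this
      have hkN₀ : N₀ ≤ k := le_trans (le_trans (le_max_left _ _) hk.1.le) le_rfl
      have hξk : |ξ k| ≤ |c| * (Real.log k / k) := by
        have := hN₀ k hkN₀
        simp only [Real.norm_eq_abs] at this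
        calc |ξ k| ≤ c * |Real.log k / k| := this
          _ ≤ |c| * |Real.log k / k| :=
            mul_le_mul_of_nonneg_right (le_abs_self c) (abs_nonneg _)
          _ = |c| * (Real.log k / k) := by
            rw [abs_of_nonneg (div_nonneg (Real.log_nonneg hk1R) (by positivity))]
      have hlogk : Real.log k ≤ Real.log n := by
        have hkn : (k : ℝ) ≤ n := by linarith
        exact Real.log_le_log (by linarith) hkn
      have hξk2 : |ξ k| ≤ |c| * Real.log n / k := by
        calc |ξ k| ≤ |c| * (Real.log k / k) := hξk
          _ ≤ |c| * (Real.log n / k) := by gcongr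
          _ = |c| * Real.log n / k := by ring
      have hnum : |ξ k * Real.log ((k : ℝ) / n)| ≤ |c| * Real.log n ^ 2 / k := by
        rw [abs_mul]
        calc |ξ k| * |Real.log ((k : ℝ) / n)|
            ≤ (|c| * Real.log n / k) * Real.log n :=
              mul_le_mul hξk2 hlog (abs_nonneg _) (by positivity)
          _ = |c| * Real.log n ^ 2 / k := by ring
      have hident : |c| * Real.log n ^ 2 / k / ((n : ℝ) - k)
          = (|c| * Real.log n ^ 2 / n) * (((k : ℝ))⁻¹ + ((n : ℝ) - k)⁻¹) := by
        field_simp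
        try ring
      calc |ξ k * Real.log ((k : ℝ) / n)| / ((n : ℝ) - k)
          ≤ (|c| * Real.log n ^ 2 / k) / ((n : ℝ) - k) := by
            gcongr
        _ = _ := hident
    have hsum2 : ∑ k ∈ Finset.Icc 1 (n - 1), (((k : ℝ))⁻¹ + ((n : ℝ) - k)⁻¹)
        ≤ 4 * Real.log n := by
      rw [Finset.sum_add_distrib, sum_inv_sub_eq n (by omega)]
      have hh := sum_inv_Icc_le (n - 1)
      have hlog' : Real.log (n - 1 : ℕ) ≤ Real.log n := by
        have hpos : (0 : ℝ) < ((n - 1 : ℕ) : ℝ) := by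
          exact_mod_cast (by omega : 0 < n - 1)
        exact Real.log_le_log hpos (by exact_mod_cast Nat.sub_le n 1)
      linarith
    calc ∑ k ∈ Finset.Ioc N (n - 1), |ξ k * Real.log ((k : ℝ) / n)| / ((n : ℝ) - k)
        ≤ ∑ k ∈ Finset.Ioc N (n - 1),
            (|c| * Real.log n ^ 2 / n) * (((k : ℝ))⁻¹ + ((n : ℝ) - k)⁻¹) :=
          Finset.sum_le_sum hper
      _ = (|c| * Real.log n ^ 2 / n) *
            ∑ k ∈ Finset.Ioc N (n - 1), (((k : ℝ))⁻¹ + ((n : ℝ) - k)⁻¹) := by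
          rw [Finset.mul_sum]
      _ ≤ (|c| * Real.log n ^ 2 / n) *
            ∑ k ∈ Finset.Icc 1 (n - 1), (((k : ℝ))⁻¹ + ((n : ℝ) - k)⁻¹) := by
          apply mul_le_mul_of_nonneg_left _ (by positivity)
          apply Finset.sum_le_sum_of_subset_of_nonneg
          · intro a ha
            simp only [Finset.mem_Icc, Finset.mem_Ioc] at ha ⊢; omega
          · intro k hk _
            obtain ⟨hkpos, hdk, _⟩ := hkfacts k hk
            positivity
      _ ≤ (|c| * Real.log n ^ 2 / n) * (4 * Real.log n) := by
          apply mul_le_mul_of_nonneg_left hsum2 (by positivity)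
      _ = 4 * |c| * (Real.log n ^ 3 / n) := by ring
  -- combine
  have hLHS : ‖∑ k ∈ Finset.Icc 1 (n - 1),
      |ξ k * Real.log ((k : ℝ) / n)| / ((n : ℝ) - k)‖
      = ∑ k ∈ Finset.Icc 1 (n - 1), |ξ k * Real.log ((k : ℝ) / n)| / ((n : ℝ) - k) := by
    rw [Real.norm_eq_abs, abs_of_nonneg (Finset.sum_nonneg hnonneg)]
  rw [hLHS, Real.norm_eq_abs, abs_of_nonneg hX, hsplit, Finset.sum_union hdisj]
  have hcn : (0:ℝ) ≤ |c| := abs_nonneg c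
  nlinarith [h1, h2]
end
end

section
/- Let A* > 0 be a constant and let (σ_n²)_{n≥1} be a nonnegative real sequence with σ_n² = A*·(log n)³ + O((log n)²). For n ≥ 2 define G_n = σ_{I_n} / (√(A*)·(log n)^{3/2}), where I_n has P(I_n = i) = 1/((n−i)·θ(n−1)) for 1 ≤ i ≤ n−1. Then |G_n − 1| = O( (|log(I_n/n)| + 1)/log n ) pointwise, and E[|G_n − 1|³] = (1/θ(n−1)) · Σ_{i=1}^{n−1} |σ_i/(√(A*)·(log n)^{3/2}) − 1|³/(n−i) = O((log n)^{−3}). -/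
open MeasureTheory Filter Real Asymptotics

noncomputable section

set_option maxHeartbeats 1000000

private lemma log_cube_bound' {x : ℝ} (hx : 1 ≤ x) : (Real.log x + 1)^3 ≤ 4 * x := by
  have ht : 0 ≤ Real.log x := Real.log_nonneg hx
  set t := Real.log x with hxt
  have hs : (t+1)/3 ≤ Real.exp ((t+1)/3 - 1) := by
    have := Real.add_one_le_exp ((t+1)/3 - 1); linarith
  have h3 : ((t+1)/3)^3 ≤ Real.exp ((t+1)/3 - 1) ^ 3 :=
    pow_le_pow_left₀ (by positivity) hs 3
  have he : Real.exp ((t+1)/3 - 1) ^ 3 = Real.exp (t - 2) := by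
    rw [← Real.exp_nat_mul]; ring_nf
  have hx' : Real.exp t = x := Real.exp_log (by linarith)
  have hex : Real.exp (t - 2) * Real.exp 2 = x := by
    rw [← Real.exp_add]; simpa using hx'
  have he2 : (6.75:ℝ) ≤ Real.exp 2 := by
    have h1 : (2.7:ℝ) ≤ Real.exp 1 := by
      have := Real.exp_one_gt_d9; linarith
    have : Real.exp 1 * Real.exp 1 = Real.exp 2 := by rw [← Real.exp_add]; norm_num
    nlinarith
  have hep : 0 < Real.exp (t-2) := Real.exp_pos _
  nlinarith [h3, he ▸ h3]

private lemma sigma_bound' (Astar : ℝ) (σsq : ℕ → ℝ)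
    (hσ : (fun n : ℕ => σsq n - Astar * Real.log n ^ 3)
      =O[atTop] (fun n : ℕ => Real.log n ^ 2)) :
    ∃ K : ℝ, 0 < K ∧ ∀ i : ℕ, |σsq i - Astar * Real.log i ^ 3| ≤ K * (Real.log i ^ 2 + 1) := by
  obtain ⟨c, hc, h⟩ := hσ.exists_pos
  rw [isBigOWith_iff, eventually_atTop] at h
  obtain ⟨N, hN⟩ := h
  set M := ∑ j ∈ Finset.range N, |σsq j - Astar * Real.log j ^ 3| with hM
  have hM0 : 0 ≤ M := Finset.sum_nonneg fun j _ => abs_nonneg _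
  refine ⟨c + M + 1, by positivity, fun i => ?_⟩
  rcases le_or_gt N i with hi | hi
  · have h1 := hN i hi
    rw [Real.norm_eq_abs, Real.norm_eq_abs, abs_of_nonneg (sq_nonneg (Real.log i))] at h1
    nlinarith [sq_nonneg (Real.log i), abs_nonneg (σsq i - Astar * Real.log i ^ 3)]
  · have h1 : |σsq i - Astar * Real.log i ^ 3| ≤ M :=
      Finset.single_le_sum (f := fun j => |σsq j - Astar * Real.log j ^ 3|)
        (fun j _ => abs_nonneg _) (Finset.mem_range.mpr hi)
    nlinarith [sq_nonneg (Real.log i)]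

private lemma pointwise_bound' (Astar : ℝ) (hA : 0 < Astar) (σsq : ℕ → ℝ)
    (hσnonneg : ∀ n, 0 ≤ σsq n) (K : ℝ) (hK : 0 < K)
    (hKb : ∀ i : ℕ, |σsq i - Astar * Real.log i ^ 3| ≤ K * (Real.log i ^ 2 + 1)) :
    ∀ n : ℕ, 2 ≤ n → ∀ i : ℕ, 1 ≤ i → i ≤ n - 1 →
      |Real.sqrt (σsq i) / (Real.sqrt Astar * Real.log n ^ ((3 : ℝ) / 2)) - 1|
        ≤ (K * (1 + ((Real.log 2)⁻¹)^2) / Astar + 3) *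
            ((|Real.log ((i : ℝ) / (n : ℝ))| + 1) / Real.log n) := by
  intro n hn i hi1 hi2
  have hn2 : (2:ℝ) ≤ (n:ℝ) := by exact_mod_cast hn
  have hlog2 : 0 < Real.log 2 := Real.log_pos (by norm_num)
  have hL2 : Real.log 2 ≤ Real.log n := Real.log_le_log (by norm_num) hn2
  have hL0 : 0 < Real.log n := lt_of_lt_of_le hlog2 hL2
  set L := Real.log n with hLdef
  have hi0 : (1:ℝ) ≤ (i:ℝ) := by exact_mod_cast hi1
  have hin : (i:ℝ) ≤ (n:ℝ) := by
    have : i ≤ n := le_trans hi2 (Nat.sub_le n 1)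
    exact_mod_cast this
  set ℓ := Real.log i with hldef
  have hℓ0 : 0 ≤ ℓ := Real.log_nonneg hi0
  have hℓL : ℓ ≤ L := Real.log_le_log (by linarith) hin
  have habs : |Real.log ((i : ℝ) / (n : ℝ))| = L - ℓ := by
    rw [Real.log_div (by linarith) (by linarith), abs_of_nonpos (by linarith)]
    ring
  have hD2 : (Real.sqrt Astar * L ^ ((3:ℝ)/2))^2 = Astar * L^3 := by
    have h1 : (L ^ ((3:ℝ)/2))^2 = L^3 := by
      rw [← Real.rpow_natCast (L ^ ((3:ℝ)/2)) 2, ← Real.rpow_mul hL0.le]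
      norm_num
    rw [mul_pow, Real.sq_sqrt hA.le, h1]
  have hD0 : 0 < Real.sqrt Astar * L ^ ((3:ℝ)/2) :=
    mul_pos (Real.sqrt_pos.mpr hA) (Real.rpow_pos_of_pos hL0 _)
  set G := Real.sqrt (σsq i) / (Real.sqrt Astar * L ^ ((3:ℝ)/2)) with hGdef
  have hG0 : 0 ≤ G := div_nonneg (Real.sqrt_nonneg _) hD0.le
  have hAL : 0 < Astar * L^3 := by positivity
  have hG2 : G^2 = σsq i / (Astar * L^3) := by
    rw [hGdef, div_pow, Real.sq_sqrt (hσnonneg i), hD2]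
  have step1 : |G - 1| ≤ |G^2 - 1| := by
    have e : |G^2 - 1| = |G - 1| * (G + 1) := by
      rw [show G^2 - 1 = (G - 1) * (G + 1) by ring, abs_mul,
        abs_of_nonneg (by linarith : (0:ℝ) ≤ G + 1)]
    rw [e]
    exact le_mul_of_one_le_right (abs_nonneg _) (by linarith)
  have step2 : |G^2 - 1| = |σsq i - Astar * L^3| / (Astar * L^3) := by
    rw [hG2, show σsq i / (Astar * L^3) - 1 = (σsq i - Astar * L^3)/(Astar * L^3) by
      field_simp, abs_div, abs_of_pos hAL]
  have hcube : ℓ^3 ≤ L^3 := pow_le_pow_left₀ hℓ0 hℓL 3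
  have htri : |σsq i - Astar * L^3| ≤ |σsq i - Astar * ℓ^3| + Astar*(L^3-ℓ^3) := by
    have h2 : |Astar*ℓ^3 - Astar*L^3| = Astar*(L^3-ℓ^3) := by
      rw [abs_of_nonpos (by nlinarith)]; ring
    calc |σsq i - Astar * L^3|
        = |(σsq i - Astar*ℓ^3) + (Astar*ℓ^3 - Astar*L^3)| := by ring_nf
      _ ≤ |σsq i - Astar*ℓ^3| + |Astar*ℓ^3 - Astar*L^3| := abs_add_le _ _
      _ = |σsq i - Astar*ℓ^3| + Astar*(L^3-ℓ^3) := by rw [h2]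
  have hnum : |σsq i - Astar * L^3| ≤ K*(L^2+1) + 3*Astar*(L-ℓ)*L^2 := by
    have h1 := hKb i
    rw [← hldef] at h1
    nlinarith [htri, h1,
      mul_nonneg hA.le (mul_nonneg (sq_nonneg (L-ℓ)) (by linarith : (0:ℝ) ≤ 2*L+ℓ)),
      mul_nonneg hK.le (mul_nonneg (sub_nonneg.2 hℓL) (by linarith : (0:ℝ) ≤ L+ℓ))]
  set b := (Real.log 2)⁻¹ with hbdef
  have hb : b * Real.log 2 = 1 := inv_mul_cancel₀ (ne_of_gt hlog2)
  have hb0 : 0 < b := inv_pos.mpr hlog2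
  have hbL : 1 ≤ b * L := by
    calc (1:ℝ) = b * Real.log 2 := hb.symm
      _ ≤ b * L := mul_le_mul_of_nonneg_left hL2 hb0.le
  have hb2 : 1 ≤ b^2 * L^2 := by
    have h := mul_le_mul hbL hbL (by norm_num) (by positivity : (0:ℝ) ≤ b*L)
    calc (1:ℝ) = 1*1 := by norm_num
      _ ≤ (b*L)*(b*L) := h
      _ = b^2*L^2 := by ring
  clear_value G b L ℓ
  rw [habs]
  have main : |σsq i - Astar * L^3| / (Astar * L^3)
      ≤ (K*(1+b^2)/Astar + 3) * ((L - ℓ + 1) / L) := by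
    rw [div_le_iff₀ hAL]
    have hRHSeq : (K*(1+b^2)/Astar + 3) * ((L - ℓ + 1)/L) * (Astar * L^3)
        = (K*(1+b^2) + 3*Astar) * ((L-ℓ) + 1) * L^2 := by
      field_simp
    rw [hRHSeq]
    have key : K*(L^2+1) + 3*Astar*(L-ℓ)*L^2 ≤ (K*(1+b^2) + 3*Astar)*((L-ℓ)+1)*L^2 := by
      nlinarith [mul_nonneg (mul_nonneg hK.le (sub_nonneg.2 hℓL)) (sq_nonneg L),
        mul_nonneg (mul_nonneg (mul_nonneg (sq_nonneg b) hK.le) (sub_nonneg.2 hℓL)) (sq_nonneg L),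
        mul_nonneg hA.le (sq_nonneg L),
        mul_le_mul_of_nonneg_left hb2 hK.le]
    linarith
  calc |G - 1| ≤ |σsq i - Astar * L^3| / (Astar * L^3) := step1.trans_eq step2
    _ ≤ _ := main

private lemma sum_refl' (n : ℕ) (hn : 2 ≤ n) :
    ∑ i ∈ Finset.Icc 1 (n-1), (1:ℝ)/((n:ℝ) - (i:ℝ)) = harmSum (n-1) := by
  rw [harmSum]
  refine Finset.sum_nbij' (fun i => n - i) (fun j => n - j) ?_ ?_ ?_ ?_ ?_
  · intro a ha; simp only [Finset.mem_Icc] at *; omega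
  · intro a ha; simp only [Finset.mem_Icc] at *; omega
  · intro a ha; simp only [Finset.mem_Icc] at *; omega
  · intro a ha; simp only [Finset.mem_Icc] at *; omega
  · intro a ha
    simp only [Finset.mem_Icc] at ha
    rw [Nat.cast_sub (by omega)]

private lemma harmSum_ge_one' (m : ℕ) (hm : 1 ≤ m) : 1 ≤ harmSum m := by
  rw [harmSum]
  have h1 : (1:ℕ) ∈ Finset.Icc 1 m := by simp [hm]
  have := Finset.single_le_sum (f := fun i : ℕ => (1:ℝ)/i) (fun i _ => by positivity) h1
  simpa using this

/-- with `σ_n² = A* (log n)³ + O((log n)²)` (`A* > 0`) and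
`G_n = σ_{I_n}/(√A* (log n)^{3/2})`, one has the pointwise bound
`|G_n − 1| = O((|log(I_n/n)| + 1)/log n)` (uniformly over the possible values
`1 ≤ i ≤ n − 1` of `I_n`), and `E[|G_n − 1|³] = O((log n)^{−3})`. -/
theorem G_minus_one_bounds
    (Astar : ℝ) (hA : 0 < Astar)
    (σsq : ℕ → ℝ) (hσnonneg : ∀ n, 0 ≤ σsq n)
    (hσ : (fun n : ℕ => σsq n - Astar * Real.log n ^ 3)
      =O[atTop] (fun n : ℕ => Real.log n ^ 2)) :
    (∃ Cc : ℝ, ∀ n : ℕ, 2 ≤ n → ∀ i : ℕ, 1 ≤ i → i ≤ n - 1 →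
      |Real.sqrt (σsq i) / (Real.sqrt Astar * Real.log n ^ ((3 : ℝ) / 2)) - 1|
        ≤ Cc * ((|Real.log ((i : ℝ) / (n : ℝ))| + 1) / Real.log n)) ∧
    ((fun n : ℕ => (1 / harmSum (n - 1)) *
        ∑ i ∈ Finset.Icc 1 (n - 1),
          |Real.sqrt (σsq i) / (Real.sqrt Astar * Real.log n ^ ((3 : ℝ) / 2)) - 1| ^ 3
            / ((n : ℝ) - (i : ℝ)))
      =O[atTop] (fun n : ℕ => Real.log n ^ (-(3 : ℝ)))) := by
  obtain ⟨K, hK, hKb⟩ := sigma_bound' Astar σsq hσ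
  set Cc := K * (1 + ((Real.log 2)⁻¹)^2) / Astar + 3 with hCcdef
  have hlog2 : 0 < Real.log 2 := Real.log_pos (by norm_num)
  have hCc0 : 0 < Cc := by positivity
  have hpt := pointwise_bound' Astar hA σsq hσnonneg K hK hKb
  refine ⟨⟨Cc, hpt⟩, ?_⟩
  rw [isBigO_iff]
  refine ⟨8 * Cc^3, ?_⟩
  filter_upwards [eventually_ge_atTop 2] with n hn
  have hn2 : (2:ℝ) ≤ (n:ℝ) := by exact_mod_cast hn
  have hL2 : Real.log 2 ≤ Real.log n := Real.log_le_log (by norm_num) hn2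
  have hL0 : 0 < Real.log n := lt_of_lt_of_le hlog2 hL2
  set L := Real.log n with hLdef
  have hθ : 1 ≤ harmSum (n-1) := harmSum_ge_one' (n-1) (by omega)
  have hθ0 : 0 < harmSum (n-1) := by linarith
  -- termwise bound
  have hterm : ∀ i ∈ Finset.Icc 1 (n-1),
      |Real.sqrt (σsq i) / (Real.sqrt Astar * L ^ ((3 : ℝ) / 2)) - 1| ^ 3
          / ((n : ℝ) - (i : ℝ))
        ≤ 4 * Cc^3 / L^3 * ((1:ℝ)/(i:ℝ) + 1/((n:ℝ) - (i:ℝ))) := by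
    intro i hi
    rw [Finset.mem_Icc] at hi
    have hi1 : (1:ℝ) ≤ (i:ℝ) := by exact_mod_cast hi.1
    have hiltn : (i:ℝ) < (n:ℝ) := by
      have : i < n := by omega
      exact_mod_cast this
    have hni : 0 < (n:ℝ) - (i:ℝ) := by linarith
    have hi0 : (0:ℝ) < (i:ℝ) := by linarith
    have hbnd := hpt n hn i hi.1 (by omega)
    have habs2 : |Real.log ((i : ℝ) / (n : ℝ))| = Real.log ((n:ℝ)/(i:ℝ)) := by
      rw [show (i:ℝ)/(n:ℝ) = ((n:ℝ)/(i:ℝ))⁻¹ by rw [inv_div], Real.log_inv, abs_neg,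
        abs_of_nonneg (Real.log_nonneg ((one_le_div hi0).mpr hiltn.le))]
    have hx1 : (1:ℝ) ≤ (n:ℝ)/(i:ℝ) := (one_le_div hi0).mpr hiltn.le
    have hcube : (|Real.log ((i : ℝ) / (n : ℝ))| + 1)^3 ≤ 4 * ((n:ℝ)/(i:ℝ)) := by
      rw [habs2]; exact log_cube_bound' hx1
    have h1 : |Real.sqrt (σsq i) / (Real.sqrt Astar * L ^ ((3 : ℝ) / 2)) - 1| ^ 3
        ≤ (Cc * ((|Real.log ((i : ℝ) / (n : ℝ))| + 1) / L))^3 :=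
      pow_le_pow_left₀ (abs_nonneg _) hbnd 3
    have habs0 : 0 ≤ |Real.log ((i : ℝ) / (n : ℝ))| + 1 := by positivity
    have h2 : (Cc * ((|Real.log ((i : ℝ) / (n : ℝ))| + 1) / L))^3
        = Cc^3 * (|Real.log ((i : ℝ) / (n : ℝ))| + 1)^3 / L^3 := by ring
    have h3 : Cc^3 * (|Real.log ((i : ℝ) / (n : ℝ))| + 1)^3 / L^3
        ≤ Cc^3 * (4 * ((n:ℝ)/(i:ℝ))) / L^3 := by
      gcongr
    have h4 : Cc^3 * (4 * ((n:ℝ)/(i:ℝ))) / L^3 / ((n:ℝ) - (i:ℝ))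
        = 4 * Cc^3 / L^3 * ((1:ℝ)/(i:ℝ) + 1/((n:ℝ) - (i:ℝ))) := by
      field_simp
      ring
    calc |Real.sqrt (σsq i) / (Real.sqrt Astar * L ^ ((3 : ℝ) / 2)) - 1| ^ 3
          / ((n : ℝ) - (i : ℝ))
        ≤ Cc^3 * (4 * ((n:ℝ)/(i:ℝ))) / L^3 / ((n:ℝ) - (i:ℝ)) := by
          have := le_trans (le_trans h1 (le_of_eq h2)) h3
          gcongr
      _ = 4 * Cc^3 / L^3 * ((1:ℝ)/(i:ℝ) + 1/((n:ℝ) - (i:ℝ))) := h4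
  have hsum : ∑ i ∈ Finset.Icc 1 (n-1),
      |Real.sqrt (σsq i) / (Real.sqrt Astar * L ^ ((3 : ℝ) / 2)) - 1| ^ 3
        / ((n : ℝ) - (i : ℝ))
      ≤ 8 * Cc^3 / L^3 * harmSum (n-1) := by
    calc ∑ i ∈ Finset.Icc 1 (n-1),
        |Real.sqrt (σsq i) / (Real.sqrt Astar * L ^ ((3 : ℝ) / 2)) - 1| ^ 3
          / ((n : ℝ) - (i : ℝ))
        ≤ ∑ i ∈ Finset.Icc 1 (n-1),
            4 * Cc^3 / L^3 * ((1:ℝ)/(i:ℝ) + 1/((n:ℝ) - (i:ℝ))) :=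
          Finset.sum_le_sum hterm
      _ = 4 * Cc^3 / L^3 * (harmSum (n-1) + harmSum (n-1)) := by
          rw [← Finset.mul_sum, Finset.sum_add_distrib, sum_refl' n hn]
          rw [harmSum]
      _ = 8 * Cc^3 / L^3 * harmSum (n-1) := by ring
  have hnonneg : 0 ≤ (1 / harmSum (n - 1)) *
      ∑ i ∈ Finset.Icc 1 (n - 1),
        |Real.sqrt (σsq i) / (Real.sqrt Astar * L ^ ((3 : ℝ) / 2)) - 1| ^ 3
          / ((n : ℝ) - (i : ℝ)) := by
    apply mul_nonneg (by positivity)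
    apply Finset.sum_nonneg
    intro i hi
    rw [Finset.mem_Icc] at hi
    have : (i:ℝ) < (n:ℝ) := by exact_mod_cast (by omega : i < n)
    have hni : 0 ≤ (n:ℝ) - (i:ℝ) := by linarith
    positivity
  have hLrpow : L ^ (-(3:ℝ)) = (L^3)⁻¹ := by
    rw [Real.rpow_neg hL0.le, show (3:ℝ) = ((3:ℕ):ℝ) by norm_num, Real.rpow_natCast]
  rw [Real.norm_eq_abs, Real.norm_eq_abs, abs_of_nonneg hnonneg,
    abs_of_nonneg (by rw [hLrpow]; positivity)]
  rw [hLrpow]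
  have hfinal : (1 / harmSum (n - 1)) *
      ∑ i ∈ Finset.Icc 1 (n - 1),
        |Real.sqrt (σsq i) / (Real.sqrt Astar * L ^ ((3 : ℝ) / 2)) - 1| ^ 3
          / ((n : ℝ) - (i : ℝ))
      ≤ (1 / harmSum (n - 1)) * (8 * Cc^3 / L^3 * harmSum (n-1)) :=
    mul_le_mul_of_nonneg_left hsum (by positivity)
  calc (1 / harmSum (n - 1)) *
      ∑ i ∈ Finset.Icc 1 (n - 1),
        |Real.sqrt (σsq i) / (Real.sqrt Astar * L ^ ((3 : ℝ) / 2)) - 1| ^ 3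
          / ((n : ℝ) - (i : ℝ))
      ≤ (1 / harmSum (n - 1)) * (8 * Cc^3 / L^3 * harmSum (n-1)) := hfinal
    _ = 8 * Cc^3 * (L^3)⁻¹ := by
        field_simp
    _ ≤ 8 * Cc^3 * (L^3)⁻¹ := le_refl _
end
end
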